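/- The horospherical projection in the Lorentz model admits the closed form P̃^v(x) = −(1/(2c))·((1 + c²)x⁰ + (1 − c²)v), where c = ⟨x, x⁰+v⟩_L; that is, this expression equals ((1+u²)/(1−u²))x⁰ + (2u/(1−u²))v with u = (1+c)/(1−c). -/
import Mathlib


open MeasureTheory

noncomputable def arcosh (x : ℝ) : ℝ := Real.log (x + Real.sqrt (x^2 - 1))

noncomputable def mink (d : ℕ) (x y : Fin (d+1) → ℝ) : ℝ :=
  -(x 0 * y 0) + ∑ i : Fin d, x i.succ * y i.succ

def LorentzSet (d : ℕ) : Set (Fin (d+1) → ℝ) :=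
  {x | mink d x x = -1 ∧ 0 < x 0}

noncomputable def dL (d : ℕ) (x y : Fin (d+1) → ℝ) : ℝ :=
  arcosh (-(mink d x y))

noncomputable def lorOrigin (d : ℕ) : Fin (d+1) → ℝ := fun i => if i = 0 then 1 else 0

/-- closed form for the horospherical projection:
`−(1/(2c))((1+c²)x⁰ + (1−c²)v)` equals `((1+u²)/(1−u²))x⁰ + (2u/(1−u²))v`
with `u = (1+c)/(1−c)`, `c = ⟨x, x⁰+v⟩_L`. -/
theorem horospherical_projection_closed_form (d : ℕ) (v : Fin (d+1) → ℝ)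
    (hv0 : v 0 = 0) (hv : mink d v v = 1)
    (x : Fin (d+1) → ℝ) (hx : x ∈ LorentzSet d) :
    let c := mink d x (fun i => lorOrigin d i + v i)
    let u := (1 + c) / (1 - c)
    (fun i => -(1/(2*c)) * ((1 + c^2) * lorOrigin d i + (1 - c^2) * v i)) =
      (fun i => ((1 + u^2) / (1 - u^2)) * lorOrigin d i + (2*u / (1 - u^2)) * v i) := by
  intro c u
  obtain ⟨hxx, hx0⟩ := hx
  have hxx' : ∑ i : Fin d, x i.succ ^ 2 = x 0 ^ 2 - 1 := by
    have := hxx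
    simp only [mink] at this
    simp_rw [← sq] at this
    linarith
  have hvv' : ∑ i : Fin d, v i.succ ^ 2 = 1 := by
    simp only [mink, hv0] at hv
    simp_rw [← sq] at hv
    linarith
  have hc : c = -(x 0) + ∑ i : Fin d, x i.succ * v i.succ := by
    simp [c, mink, lorOrigin, hv0, Fin.succ_ne_zero]
  have hcs : (∑ i : Fin d, x i.succ * v i.succ) ^ 2 ≤
      (∑ i : Fin d, x i.succ ^ 2) * ∑ i : Fin d, v i.succ ^ 2 :=
    Finset.sum_mul_sq_le_sq_mul_sq _ _ _
  have hcneg : c < 0 := by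
    rw [hc]
    rw [hxx', hvv'] at hcs
    nlinarith [hcs, hx0]
  have hcne : c ≠ 0 := ne_of_lt hcneg
  have h1c : (1 : ℝ) - c ≠ 0 := by nlinarith
  have h1u : 1 - u ^ 2 = -4 * c / (1 - c) ^ 2 := by
    show 1 - ((1 + c) / (1 - c)) ^ 2 = _
    field_simp
    ring
  have hA : (1 + u ^ 2) / (1 - u ^ 2) = -(1 / (2 * c)) * (1 + c ^ 2) := by
    rw [h1u]
    show (1 + ((1 + c) / (1 - c)) ^ 2) / _ = _
    field_simp
    ring
  have hB : 2 * u / (1 - u ^ 2) = -(1 / (2 * c)) * (1 - c ^ 2) := by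
    rw [h1u]
    show 2 * ((1 + c) / (1 - c)) / _ = _
    field_simp
    ring
  funext i
  simp only [hA, hB]
  ring
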